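/- Let 𝓛 = −div(𝓐 ∇) be an elliptic operator on ℝ^{d+1}_+ with bounded measurable real coefficients (a_{ij})_{1≤i,j≤d+1}, and define the n×n matrix A(x,t) = |t|^{d+1−n} ((a_{ij}, (t_j/|t|) a_{i(d+1)}); ((t_i/|t|) a_{(d+1)j}, a_{(d+1)(d+1)} Id)) on Ω₀ = ℝⁿ \ ℝ^d. Then A satisfies the degenerate ellipticity and boundedness conditions: A(X)ξ·ζ ≤ C₃ |t|^{d+1−n} |ξ||ζ| and A(X)ξ·ξ ≥ C₃⁻¹ |t|^{d+1−n} |ξ|² for all ξ, ζ ∈ ℝⁿ, with C₃ depending only on the ellipticity constant of 𝓐 and the dimensions. -/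

import Mathlib

open MeasureTheory Metric Set
open scoped ENNReal

/-- The norm |t| of the last n-d coordinates of X ∈ ℝⁿ = ℝ^d × ℝ^{n-d}. -/
noncomputable def tNorm {n : ℕ} (d : ℕ) (X : EuclideanSpace ℝ (Fin n)) : ℝ :=
  Real.sqrt (∑ i : Fin n, if d ≤ (i : ℕ) then X i ^ 2 else 0)

/-- The map (x,t) ↦ (x,|t|) ∈ ℝ^{d+1}_+. -/
noncomputable def cylProj {n : ℕ} (d : ℕ) (hdn : d < n) (X : EuclideanSpace ℝ (Fin n)) :
    EuclideanSpace ℝ (Fin (d + 1)) :=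
  WithLp.toLp 2 (fun i => if h : (i : ℕ) < d then X ⟨i, h.trans hdn⟩ else tNorm d X)

private lemma fin_sum_lt {n d : ℕ} (hdn : d ≤ n) (g : ∀ i : Fin n, (i : ℕ) < d → ℝ) :
    ∑ p : Fin d, g (Fin.castLE hdn p) p.2 = ∑ i : Fin n, if h : (i : ℕ) < d then g i h else 0 := by
  classical
  set G : ℕ → ℝ := fun k => if h : k < n then (if h2 : k < d then g ⟨k, h⟩ h2 else 0) else 0 with hG
  have l1 : ∑ p : Fin d, g (Fin.castLE hdn p) p.2 = ∑ k ∈ Finset.range d, G k := by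
    rw [← Fin.sum_univ_eq_sum_range G d]
    refine Finset.sum_congr rfl fun p _ => ?_
    rw [hG]
    simp only []
    rw [dif_pos (lt_of_lt_of_le p.2 hdn), dif_pos p.2]
    rfl
  have l2 : ∑ k ∈ Finset.range d, G k = ∑ k ∈ Finset.range n, G k := by
    refine Finset.sum_subset (Finset.range_subset_range.2 hdn) fun k _ hk => ?_
    simp only [Finset.mem_range, not_lt] at hk
    rw [hG]; simp only []
    split_ifs with h1 h2
    · omega
    · rfl
    · rfl
  rw [l1, l2, ← Fin.sum_univ_eq_sum_range G n]
  refine Finset.sum_congr rfl fun i _ => ?_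
  rw [hG]; simp only []
  rw [dif_pos i.isLt]

private lemma eucl_norm_sq {m : ℕ} (v : EuclideanSpace ℝ (Fin m)) :
    ‖v‖ ^ 2 = ∑ i, v i ^ 2 := by
  rw [EuclideanSpace.norm_eq, Real.sq_sqrt (Finset.sum_nonneg fun i _ => by positivity)]
  simp [Real.norm_eq_abs, sq_abs]

private noncomputable def Sbl {n : ℕ} (d : ℕ) (X v : EuclideanSpace ℝ (Fin n)) : ℝ :=
  ∑ j : Fin n, if d ≤ (j : ℕ) then (X j / tNorm d X) * v j else 0

private noncomputable def Tbl {n : ℕ} (d : ℕ) (u v : EuclideanSpace ℝ (Fin n)) : ℝ :=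
  ∑ j : Fin n, if d ≤ (j : ℕ) then u j * v j else 0

private noncomputable def hatv {n d : ℕ} (hdn : d < n) (X v : EuclideanSpace ℝ (Fin n)) :
    EuclideanSpace ℝ (Fin (d + 1)) :=
  WithLp.toLp 2 (fun p => if h : (p : ℕ) < d then v ⟨(p : ℕ), h.trans hdn⟩ else Sbl d X v)

private lemma hatv_castSucc {n d : ℕ} (hdn : d < n) (X v : EuclideanSpace ℝ (Fin n)) (p : Fin d) :
    hatv hdn X v (Fin.castSucc p) = v ⟨(p : ℕ), p.2.trans hdn⟩ := by
  simp [hatv, p.2]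

private lemma hatv_last {n d : ℕ} (hdn : d < n) (X v : EuclideanSpace ℝ (Fin n)) :
    hatv hdn X v (Fin.last d) = Sbl d X v := by
  simp [hatv]

private lemma inner_expand {n d : ℕ} (hdn : d < n) (X : EuclideanSpace ℝ (Fin n))
    (a : Matrix (Fin (d + 1)) (Fin (d + 1)) ℝ) (u : EuclideanSpace ℝ (Fin n)) (pp : Fin (d + 1)) :
    (∑ q, a pp q * hatv hdn X u q)
      = (∑ j : Fin n, if hj : (j : ℕ) < d then a pp ⟨(j : ℕ), Nat.lt_succ_of_lt hj⟩ * u j else 0)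
        + a pp (Fin.last d) * Sbl d X u := by
  rw [Fin.sum_univ_castSucc]
  congr 1
  · rw [← fin_sum_lt hdn.le (fun j hj => a pp ⟨(j : ℕ), Nat.lt_succ_of_lt hj⟩ * u j)]
    refine Finset.sum_congr rfl fun q _ => ?_
    rw [hatv_castSucc]
    rfl
  · rw [hatv_last]

private lemma bilin_expand {n d : ℕ} (hdn : d < n) (X : EuclideanSpace ℝ (Fin n))
    (a : Matrix (Fin (d + 1)) (Fin (d + 1)) ℝ) (u v : EuclideanSpace ℝ (Fin n)) :
    (∑ p, ∑ q, a p q * hatv hdn X u q * hatv hdn X v p)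
      = (∑ i : Fin n, if hi : (i : ℕ) < d then
            ((∑ j : Fin n, if hj : (j : ℕ) < d then a ⟨(i : ℕ), Nat.lt_succ_of_lt hi⟩ ⟨(j : ℕ), Nat.lt_succ_of_lt hj⟩ * u j else 0)
              + a ⟨(i : ℕ), Nat.lt_succ_of_lt hi⟩ (Fin.last d) * Sbl d X u) * v i
          else 0)
        + ((∑ j : Fin n, if hj : (j : ℕ) < d then a (Fin.last d) ⟨(j : ℕ), Nat.lt_succ_of_lt hj⟩ * u j else 0)
            + a (Fin.last d) (Fin.last d) * Sbl d X u) * Sbl d X v := by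
  have step : ∀ p : Fin (d + 1),
      (∑ q, a p q * hatv hdn X u q * hatv hdn X v p)
        = ((∑ j : Fin n, if hj : (j : ℕ) < d then a p ⟨(j : ℕ), Nat.lt_succ_of_lt hj⟩ * u j else 0)
            + a p (Fin.last d) * Sbl d X u) * hatv hdn X v p := by
    intro p
    rw [← inner_expand hdn X a u p, Finset.sum_mul]
  rw [Finset.sum_congr rfl fun p _ => step p, Fin.sum_univ_castSucc]
  congr 1
  · rw [← fin_sum_lt hdn.le (fun i hi =>
      ((∑ j : Fin n, if hj : (j : ℕ) < d then a ⟨(i : ℕ), Nat.lt_succ_of_lt hi⟩ ⟨(j : ℕ), Nat.lt_succ_of_lt hj⟩ * u j else 0)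
        + a ⟨(i : ℕ), Nat.lt_succ_of_lt hi⟩ (Fin.last d) * Sbl d X u) * v i)]
    refine Finset.sum_congr rfl fun p _ => ?_
    rw [hatv_castSucc]
    rfl
  · rw [hatv_last]

private lemma cs_tail {n : ℕ} (d : ℕ) (u v : EuclideanSpace ℝ (Fin n)) :
    (∑ j : Fin n, if d ≤ (j : ℕ) then u j * v j else 0) ^ 2
      ≤ (∑ j : Fin n, if d ≤ (j : ℕ) then u j ^ 2 else 0)
        * (∑ j : Fin n, if d ≤ (j : ℕ) then v j ^ 2 else 0) := by
  have h := Finset.sum_mul_sq_le_sq_mul_sq Finset.univ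
    (fun j : Fin n => if d ≤ (j : ℕ) then u j else 0)
    (fun j : Fin n => if d ≤ (j : ℕ) then v j else 0)
  have e1 : ∀ j : Fin n, (if d ≤ (j : ℕ) then u j else 0) * (if d ≤ (j : ℕ) then v j else 0)
      = if d ≤ (j : ℕ) then u j * v j else 0 := by
    intro j; split_ifs <;> simp
  have e2 : ∀ (w : EuclideanSpace ℝ (Fin n)) (j : Fin n),
      (if d ≤ (j : ℕ) then w j else 0) ^ 2 = if d ≤ (j : ℕ) then w j ^ 2 else 0 := by
    intro w j; split_ifs <;> simp
  rw [Finset.sum_congr rfl fun j _ => e1 j, Finset.sum_congr rfl fun j _ => e2 u j,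
    Finset.sum_congr rfl fun j _ => e2 v j] at h
  exact h

private lemma tbl_nonneg {n : ℕ} (d : ℕ) (v : EuclideanSpace ℝ (Fin n)) : 0 ≤ Tbl d v v := by
  refine Finset.sum_nonneg fun j _ => ?_
  split_ifs
  · exact mul_self_nonneg _
  · exact le_refl 0

private lemma norm_split {n : ℕ} (d : ℕ) (v : EuclideanSpace ℝ (Fin n)) :
    ‖v‖ ^ 2 = (∑ i : Fin n, if (i : ℕ) < d then v i ^ 2 else 0) + Tbl d v v := by
  rw [eucl_norm_sq]
  unfold Tbl
  rw [← Finset.sum_add_distrib]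
  refine Finset.sum_congr rfl fun i _ => ?_
  by_cases h : (i : ℕ) < d
  · rw [if_pos h, if_neg (by omega), add_zero]
  · rw [if_neg h, if_pos (by omega), zero_add, sq]

private lemma hat_sq {n d : ℕ} (hdn : d < n) (X v : EuclideanSpace ℝ (Fin n)) :
    ‖hatv hdn X v‖ ^ 2
      = (∑ i : Fin n, if (i : ℕ) < d then v i ^ 2 else 0) + Sbl d X v ^ 2 := by
  rw [eucl_norm_sq, Fin.sum_univ_castSucc, hatv_last]
  congr 1
  have := fin_sum_lt hdn.le (fun i (_ : (i : ℕ) < d) => v i ^ 2)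
  rw [show (∑ i : Fin n, if (i : ℕ) < d then v i ^ 2 else 0)
      = ∑ i : Fin n, if h : (i : ℕ) < d then v i ^ 2 else 0 by
    exact Finset.sum_congr rfl fun i _ => by split_ifs <;> rfl]
  rw [← this]
  refine Finset.sum_congr rfl fun p _ => ?_
  rw [hatv_castSucc]
  rfl

private lemma tnorm_sq {n : ℕ} (d : ℕ) (X : EuclideanSpace ℝ (Fin n)) :
    tNorm d X ^ 2 = ∑ i : Fin n, if d ≤ (i : ℕ) then X i ^ 2 else 0 := by
  unfold tNorm
  refine Real.sq_sqrt (Finset.sum_nonneg fun i _ => ?_)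
  split_ifs
  · positivity
  · exact le_refl 0

private lemma sbl_sq_le {n : ℕ} (d : ℕ) (X v : EuclideanSpace ℝ (Fin n))
    (hr : tNorm d X ≠ 0) : Sbl d X v ^ 2 ≤ Tbl d v v := by
  have h := cs_tail d (WithLp.toLp 2 (fun j => X j / tNorm d X) : EuclideanSpace ℝ (Fin n)) v
  have h1 : (∑ j : Fin n, if d ≤ (j : ℕ) then (X j / tNorm d X) ^ 2 else 0) = 1 := by
    have e : ∀ j : Fin n, (if d ≤ (j : ℕ) then (X j / tNorm d X) ^ 2 else 0)
        = (if d ≤ (j : ℕ) then X j ^ 2 else 0) / tNorm d X ^ 2 := by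
      intro j; split_ifs
      · rw [div_pow]
      · rw [zero_div]
    rw [Finset.sum_congr rfl fun j _ => e j, ← Finset.sum_div, ← tnorm_sq,
      div_self (pow_ne_zero 2 hr)]
  unfold Sbl Tbl
  calc (∑ j : Fin n, if d ≤ (j : ℕ) then X j / tNorm d X * v j else 0) ^ 2
      ≤ (∑ j : Fin n, if d ≤ (j : ℕ) then (X j / tNorm d X) ^ 2 else 0)
        * (∑ j : Fin n, if d ≤ (j : ℕ) then v j ^ 2 else 0) := h
    _ = ∑ j : Fin n, if d ≤ (j : ℕ) then v j * v j else 0 := by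
        rw [h1, one_mul]
        exact Finset.sum_congr rfl fun j _ => by split_ifs <;> [rw [sq]; rfl]

private lemma sq_le_imp_abs {a b : ℝ} (h : a ^ 2 ≤ b ^ 2) (hb : 0 ≤ b) : |a| ≤ b := by
  have := Real.sqrt_le_sqrt h
  rwa [Real.sqrt_sq_eq_abs, Real.sqrt_sq hb] at this

private lemma head_sq_nonneg {n : ℕ} (d : ℕ) (v : EuclideanSpace ℝ (Fin n)) :
    0 ≤ ∑ i : Fin n, if (i : ℕ) < d then v i ^ 2 else 0 := by
  refine Finset.sum_nonneg fun i _ => ?_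
  split_ifs
  · positivity
  · exact le_refl 0

private lemma tbl_le_norm {n : ℕ} (d : ℕ) (v : EuclideanSpace ℝ (Fin n)) :
    Tbl d v v ≤ ‖v‖ ^ 2 := by
  rw [norm_split d v]
  exact le_add_of_nonneg_left (head_sq_nonneg d v)

private lemma hat_norm_le {n d : ℕ} (hdn : d < n) (X v : EuclideanSpace ℝ (Fin n))
    (hr : tNorm d X ≠ 0) : ‖hatv hdn X v‖ ≤ ‖v‖ := by
  have h : ‖hatv hdn X v‖ ^ 2 ≤ ‖v‖ ^ 2 := by
    rw [hat_sq hdn X v, norm_split d v]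
    exact add_le_add_right (sbl_sq_le d X v hr) _
  have := sq_le_imp_abs h (norm_nonneg v)
  rwa [abs_of_nonneg (norm_nonneg _)] at this

private lemma sbl_abs_le {n : ℕ} (d : ℕ) (X v : EuclideanSpace ℝ (Fin n))
    (hr : tNorm d X ≠ 0) : |Sbl d X v| ≤ ‖v‖ := by
  refine sq_le_imp_abs ?_ (norm_nonneg v)
  exact (sbl_sq_le d X v hr).trans (tbl_le_norm d v)

private lemma tbl_abs_le {n : ℕ} (d : ℕ) (u v : EuclideanSpace ℝ (Fin n)) :
    |Tbl d u v| ≤ ‖u‖ * ‖v‖ := by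
  refine sq_le_imp_abs ?_ (by positivity)
  rw [mul_pow]
  have h := cs_tail d u v
  have h2 : (∑ j : Fin n, if d ≤ (j : ℕ) then u j ^ 2 else 0)
      * (∑ j : Fin n, if d ≤ (j : ℕ) then v j ^ 2 else 0) ≤ ‖u‖ ^ 2 * ‖v‖ ^ 2 := by
    have hu : (∑ j : Fin n, if d ≤ (j : ℕ) then u j ^ 2 else 0) ≤ ‖u‖ ^ 2 := by
      have := tbl_le_norm d u
      unfold Tbl at this
      refine le_trans (le_of_eq ?_) this
      exact Finset.sum_congr rfl fun j _ => by split_ifs <;> [rw [sq]; rfl]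
    have hv : (∑ j : Fin n, if d ≤ (j : ℕ) then v j ^ 2 else 0) ≤ ‖v‖ ^ 2 := by
      have := tbl_le_norm d v
      unfold Tbl at this
      refine le_trans (le_of_eq ?_) this
      exact Finset.sum_congr rfl fun j _ => by split_ifs <;> [rw [sq]; rfl]
    have hnn : 0 ≤ ∑ j : Fin n, if d ≤ (j : ℕ) then v j ^ 2 else 0 := by
      refine Finset.sum_nonneg fun j _ => ?_
      split_ifs
      · positivity
      · exact le_refl 0
    exact mul_le_mul hu hv hnn (by positivity)
  calc Tbl d u v ^ 2 ≤ _ := h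
    _ ≤ _ := h2


/-- The block matrix A built out of an elliptic matrix 𝓐 on ℝ^{d+1}_+
satisfies the degenerate ellipticity and boundedness conditions with weight |t|^{d+1-n}. -/
theorem block_matrix_degenerate_elliptic
    (n d : ℕ) (hdn : d + 1 < n) (lam Lam : ℝ) (hlam : 0 < lam) (hLam : 0 < Lam)
    (𝓐 : EuclideanSpace ℝ (Fin (d + 1)) → Matrix (Fin (d + 1)) (Fin (d + 1)) ℝ)
    (hell : ∀ y, ∀ ξ ζ : EuclideanSpace ℝ (Fin (d + 1)),
      lam * ‖ξ‖ ^ 2 ≤ ∑ i, ∑ j, 𝓐 y i j * ξ j * ξ i ∧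
      |∑ i, ∑ j, 𝓐 y i j * ξ j * ζ i| ≤ Lam * ‖ξ‖ * ‖ζ‖)
    (A : EuclideanSpace ℝ (Fin n) → Matrix (Fin n) (Fin n) ℝ)
    (hA : ∀ X : EuclideanSpace ℝ (Fin n), tNorm d X ≠ 0 → ∀ i j : Fin n,
      A X i j = tNorm d X ^ ((d : ℝ) + 1 - n) *
        (if hi : (i : ℕ) < d then
          (if hj : (j : ℕ) < d then
            𝓐 (cylProj d (by omega) X) ⟨i, by omega⟩ ⟨j, by omega⟩
          else (X j / tNorm d X) * 𝓐 (cylProj d (by omega) X) ⟨i, by omega⟩ (Fin.last d))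
        else
          (if hj : (j : ℕ) < d then
            (X i / tNorm d X) * 𝓐 (cylProj d (by omega) X) (Fin.last d) ⟨j, by omega⟩
          else 𝓐 (cylProj d (by omega) X) (Fin.last d) (Fin.last d) *
            (if i = j then 1 else 0)))) :
    ∃ C₃ : ℝ, 0 < C₃ ∧
      ∀ X : EuclideanSpace ℝ (Fin n), tNorm d X ≠ 0 →
        ∀ ξ ζ : EuclideanSpace ℝ (Fin n),
          |∑ i, ∑ j, A X i j * ξ j * ζ i| ≤
              C₃ * tNorm d X ^ ((d : ℝ) + 1 - n) * ‖ξ‖ * ‖ζ‖ ∧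
          C₃⁻¹ * tNorm d X ^ ((d : ℝ) + 1 - n) * ‖ξ‖ ^ 2 ≤
              ∑ i, ∑ j, A X i j * ξ j * ξ i := by
    classical
  have hd_n : d < n := by omega
  refine ⟨3 * Lam + lam⁻¹, by positivity, ?_⟩
  intro X hrne ξ ζ
  have hr0 : 0 < tNorm d X := lt_of_le_of_ne (Real.sqrt_nonneg _) (Ne.symm hrne)
  have hw0 : 0 < tNorm d X ^ ((d : ℝ) + 1 - n) := Real.rpow_pos_of_pos hr0 _
  -- abbreviation for the (d+1)-matrix
  have hLHS : ∀ u v : EuclideanSpace ℝ (Fin n),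
      (∑ i, ∑ j, A X i j * u j * v i)
        = tNorm d X ^ ((d : ℝ) + 1 - n) *
          ∑ i : Fin n,
            (if hi : (i : ℕ) < d then
              ((∑ j : Fin n, if hj : (j : ℕ) < d then
                  𝓐 (cylProj d hd_n X) ⟨(i : ℕ), by omega⟩ ⟨(j : ℕ), by omega⟩ * u j else 0)
                + 𝓐 (cylProj d hd_n X) ⟨(i : ℕ), by omega⟩ (Fin.last d) * Sbl d X u) * v i
            else
              ((∑ j : Fin n, if hj : (j : ℕ) < d then
                  𝓐 (cylProj d hd_n X) (Fin.last d) ⟨(j : ℕ), by omega⟩ * u j else 0)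
                  * (X i / tNorm d X * v i)
                + 𝓐 (cylProj d hd_n X) (Fin.last d) (Fin.last d) * (u i * v i))) := by
    intro u v
    rw [Finset.mul_sum]
    refine Finset.sum_congr rfl fun i _ => ?_
    by_cases hi : (i : ℕ) < d
    · rw [dif_pos hi]
      have hrow : (∑ j : Fin n, if hj : (j : ℕ) < d then
            𝓐 (cylProj d hd_n X) ⟨(i : ℕ), by omega⟩ ⟨(j : ℕ), by omega⟩ * u j else 0)
          + 𝓐 (cylProj d hd_n X) ⟨(i : ℕ), by omega⟩ (Fin.last d) * Sbl d X u
          = ∑ j : Fin n,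
            ((if hj : (j : ℕ) < d then
                𝓐 (cylProj d hd_n X) ⟨(i : ℕ), by omega⟩ ⟨(j : ℕ), by omega⟩ * u j else 0)
              + (if d ≤ (j : ℕ) then
                𝓐 (cylProj d hd_n X) ⟨(i : ℕ), by omega⟩ (Fin.last d)
                  * (X j / tNorm d X * u j) else 0)) := by
        rw [Finset.sum_add_distrib]
        congr 1
        unfold Sbl
        rw [Finset.mul_sum]
        exact Finset.sum_congr rfl fun j _ => by split_ifs <;> simp
      rw [hrow, Finset.sum_mul, Finset.mul_sum]
      refine Finset.sum_congr rfl fun j _ => ?_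
      rw [hA X hrne i j, dif_pos hi]
      by_cases hj : (j : ℕ) < d
      · rw [dif_pos hj, dif_pos hj, if_neg (by omega)]
        ring
      · rw [dif_neg hj, dif_neg hj, if_pos (by omega)]
        ring
    · rw [dif_neg hi]
      have hrow : (∑ j : Fin n, if hj : (j : ℕ) < d then
            𝓐 (cylProj d hd_n X) (Fin.last d) ⟨(j : ℕ), by omega⟩ * u j else 0)
            * (X i / tNorm d X * v i)
          + 𝓐 (cylProj d hd_n X) (Fin.last d) (Fin.last d) * (u i * v i)
          = ∑ j : Fin n,
            ((if hj : (j : ℕ) < d then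
                𝓐 (cylProj d hd_n X) (Fin.last d) ⟨(j : ℕ), by omega⟩ * u j
                  * (X i / tNorm d X * v i) else 0)
              + (if i = j then
                  𝓐 (cylProj d hd_n X) (Fin.last d) (Fin.last d) * (u j * v i) else 0)) := by
        rw [Finset.sum_add_distrib]
        congr 1
        · rw [Finset.sum_mul]
          exact Finset.sum_congr rfl fun j _ => by split_ifs <;> simp
        · rw [Finset.sum_ite_eq]
          simp
      rw [hrow, Finset.mul_sum]
      refine Finset.sum_congr rfl fun j _ => ?_
      rw [hA X hrne i j, dif_neg hi]
      by_cases hj : (j : ℕ) < d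
      · rw [dif_pos hj, dif_pos hj, if_neg (by omega)]
        ring
      · rw [dif_neg hj, dif_neg hj]
        by_cases hij : i = j
        · rw [if_pos hij, if_pos hij]
          ring
        · rw [if_neg hij, if_neg hij]
          ring
  have hKey : ∀ u v : EuclideanSpace ℝ (Fin n),
      (∑ i, ∑ j, A X i j * u j * v i)
        = tNorm d X ^ ((d : ℝ) + 1 - n) *
          ((∑ p, ∑ q, 𝓐 (cylProj d hd_n X) p q * hatv hd_n X u q * hatv hd_n X v p)
            + 𝓐 (cylProj d hd_n X) (Fin.last d) (Fin.last d)
              * (Tbl d u v - Sbl d X u * Sbl d X v)) := by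
    intro u v
    rw [hLHS u v, bilin_expand hd_n X (𝓐 (cylProj d hd_n X)) u v]
    congr 1
    have hsplit : (∑ i : Fin n,
        (if hi : (i : ℕ) < d then
          ((∑ j : Fin n, if hj : (j : ℕ) < d then
              𝓐 (cylProj d hd_n X) ⟨(i : ℕ), by omega⟩ ⟨(j : ℕ), by omega⟩ * u j else 0)
            + 𝓐 (cylProj d hd_n X) ⟨(i : ℕ), by omega⟩ (Fin.last d) * Sbl d X u) * v i
        else
          ((∑ j : Fin n, if hj : (j : ℕ) < d then
              𝓐 (cylProj d hd_n X) (Fin.last d) ⟨(j : ℕ), by omega⟩ * u j else 0)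
              * (X i / tNorm d X * v i)
            + 𝓐 (cylProj d hd_n X) (Fin.last d) (Fin.last d) * (u i * v i))))
      = (∑ i : Fin n, if hi : (i : ℕ) < d then
          ((∑ j : Fin n, if hj : (j : ℕ) < d then
              𝓐 (cylProj d hd_n X) ⟨(i : ℕ), by omega⟩ ⟨(j : ℕ), by omega⟩ * u j else 0)
            + 𝓐 (cylProj d hd_n X) ⟨(i : ℕ), by omega⟩ (Fin.last d) * Sbl d X u) * v i
          else 0)
        + ((∑ j : Fin n, if hj : (j : ℕ) < d then
            𝓐 (cylProj d hd_n X) (Fin.last d) ⟨(j : ℕ), by omega⟩ * u j else 0) * Sbl d X v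
          + 𝓐 (cylProj d hd_n X) (Fin.last d) (Fin.last d) * Tbl d u v) := by
      have step1 : ∀ i : Fin n,
          (if hi : (i : ℕ) < d then
            ((∑ j : Fin n, if hj : (j : ℕ) < d then
                𝓐 (cylProj d hd_n X) ⟨(i : ℕ), by omega⟩ ⟨(j : ℕ), by omega⟩ * u j else 0)
              + 𝓐 (cylProj d hd_n X) ⟨(i : ℕ), by omega⟩ (Fin.last d) * Sbl d X u) * v i
          else
            ((∑ j : Fin n, if hj : (j : ℕ) < d then
                𝓐 (cylProj d hd_n X) (Fin.last d) ⟨(j : ℕ), by omega⟩ * u j else 0)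
                * (X i / tNorm d X * v i)
              + 𝓐 (cylProj d hd_n X) (Fin.last d) (Fin.last d) * (u i * v i)))
          = (if hi : (i : ℕ) < d then
              ((∑ j : Fin n, if hj : (j : ℕ) < d then
                  𝓐 (cylProj d hd_n X) ⟨(i : ℕ), by omega⟩ ⟨(j : ℕ), by omega⟩ * u j else 0)
                + 𝓐 (cylProj d hd_n X) ⟨(i : ℕ), by omega⟩ (Fin.last d) * Sbl d X u) * v i
              else 0)
            + ((if d ≤ (i : ℕ) then
                (∑ j : Fin n, if hj : (j : ℕ) < d then
                  𝓐 (cylProj d hd_n X) (Fin.last d) ⟨(j : ℕ), by omega⟩ * u j else 0)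
                  * (X i / tNorm d X * v i) else 0)
              + (if d ≤ (i : ℕ) then
                  𝓐 (cylProj d hd_n X) (Fin.last d) (Fin.last d) * (u i * v i) else 0)) := by
        intro i
        by_cases hi : (i : ℕ) < d
        · rw [dif_pos hi, dif_pos hi, if_neg (by omega), if_neg (by omega)]
          ring
        · rw [dif_neg hi, dif_neg hi, if_pos (by omega), if_pos (by omega)]
          ring
      rw [Finset.sum_congr rfl fun i _ => step1 i, Finset.sum_add_distrib,
        Finset.sum_add_distrib]
      congr 1
      congr 1
      · unfold Sbl
        rw [Finset.mul_sum]
        exact Finset.sum_congr rfl fun i _ => by split_ifs <;> simp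
      · unfold Tbl
        rw [Finset.mul_sum]
        exact Finset.sum_congr rfl fun i _ => by split_ifs <;> simp
    rw [hsplit]
    ring
  have hsum_single : (∑ i, ∑ j, 𝓐 (cylProj d hd_n X) i j
      * (EuclideanSpace.single (Fin.last d) (1:ℝ)) j
      * (EuclideanSpace.single (Fin.last d) (1:ℝ)) i)
      = 𝓐 (cylProj d hd_n X) (Fin.last d) (Fin.last d) := by
    simp [EuclideanSpace.single_apply, mul_ite, ite_mul, Finset.sum_ite_eq]
  have he := hell (cylProj d hd_n X) (EuclideanSpace.single (Fin.last d) (1:ℝ))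
    (EuclideanSpace.single (Fin.last d) (1:ℝ))
  have hadd_lb : lam ≤ 𝓐 (cylProj d hd_n X) (Fin.last d) (Fin.last d) := by
    have h := he.1
    rw [hsum_single] at h
    simpa [EuclideanSpace.norm_single] using h
  have hadd_ub : |𝓐 (cylProj d hd_n X) (Fin.last d) (Fin.last d)| ≤ Lam := by
    have h := he.2
    rw [hsum_single] at h
    simpa [EuclideanSpace.norm_single] using h
  constructor
  · rw [hKey ξ ζ, abs_mul, abs_of_pos hw0]
    have t1 : |∑ p, ∑ q, 𝓐 (cylProj d hd_n X) p q * hatv hd_n X ξ q * hatv hd_n X ζ p|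
        ≤ Lam * ‖ξ‖ * ‖ζ‖ := by
      refine ((hell (cylProj d hd_n X) (hatv hd_n X ξ) (hatv hd_n X ζ)).2).trans ?_
      have h1 := hat_norm_le hd_n X ξ hrne
      have h2 := hat_norm_le hd_n X ζ hrne
      exact mul_le_mul (mul_le_mul_of_nonneg_left h1 hLam.le) h2 (norm_nonneg _)
        (by positivity)
    have t2 : |𝓐 (cylProj d hd_n X) (Fin.last d) (Fin.last d)
          * (Tbl d ξ ζ - Sbl d X ξ * Sbl d X ζ)|
        ≤ Lam * (‖ξ‖ * ‖ζ‖ + ‖ξ‖ * ‖ζ‖) := by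
      rw [abs_mul]
      refine mul_le_mul hadd_ub ?_ (abs_nonneg _) hLam.le
      refine (abs_sub _ _).trans ?_
      refine add_le_add (tbl_abs_le d ξ ζ) ?_
      rw [abs_mul]
      exact mul_le_mul (sbl_abs_le d X ξ hrne) (sbl_abs_le d X ζ hrne) (abs_nonneg _)
        (norm_nonneg _)
    have habs : |(∑ p, ∑ q, 𝓐 (cylProj d hd_n X) p q * hatv hd_n X ξ q * hatv hd_n X ζ p)
          + 𝓐 (cylProj d hd_n X) (Fin.last d) (Fin.last d)
            * (Tbl d ξ ζ - Sbl d X ξ * Sbl d X ζ)|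
        ≤ 3 * Lam * ‖ξ‖ * ‖ζ‖ := by
      refine (abs_add_le _ _).trans ?_
      linarith
    have hmain := mul_le_mul_of_nonneg_left habs hw0.le
    refine hmain.trans ?_
    have hnn : (0:ℝ) ≤ tNorm d X ^ ((d : ℝ) + 1 - n) * (‖ξ‖ * ‖ζ‖) := by positivity
    have h5 := mul_le_mul_of_nonneg_right
      (show (3*Lam : ℝ) ≤ 3*Lam + lam⁻¹ by
        have : (0:ℝ) ≤ lam⁻¹ := by positivity
        linarith) hnn
    linarith [h5]
  · rw [hKey ξ ξ]
    have hq := (hell (cylProj d hd_n X) (hatv hd_n X ξ) (hatv hd_n X ξ)).1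
    have hTS : 0 ≤ Tbl d ξ ξ - Sbl d X ξ * Sbl d X ξ := by
      have h := sbl_sq_le d X ξ hrne
      rw [sq] at h
      linarith
    have hlow : lam * ‖ξ‖ ^ 2
        ≤ (∑ p, ∑ q, 𝓐 (cylProj d hd_n X) p q * hatv hd_n X ξ q * hatv hd_n X ξ p)
          + 𝓐 (cylProj d hd_n X) (Fin.last d) (Fin.last d)
            * (Tbl d ξ ξ - Sbl d X ξ * Sbl d X ξ) := by
      have e1 : lam * ‖ξ‖ ^ 2 = lam * ‖hatv hd_n X ξ‖ ^ 2
          + lam * (Tbl d ξ ξ - Sbl d X ξ * Sbl d X ξ) := by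
        rw [hat_sq hd_n X ξ, norm_split d ξ, sq (Sbl d X ξ)]
        ring
      have e2 := mul_le_mul_of_nonneg_right hadd_lb hTS
      linarith [hq]
    have hC : (3 * Lam + lam⁻¹)⁻¹ ≤ lam := by
      have h1 : lam⁻¹ ≤ 3 * Lam + lam⁻¹ := le_add_of_nonneg_left (by positivity)
      have h2 := inv_anti₀ (show (0:ℝ) < lam⁻¹ by positivity) h1
      rwa [inv_inv] at h2
    have h7 := mul_le_mul_of_nonneg_left hlow hw0.le
    have h6 := mul_le_mul_of_nonneg_right hC
      (show (0:ℝ) ≤ tNorm d X ^ ((d : ℝ) + 1 - n) * ‖ξ‖ ^ 2 by positivity)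
    linarith [h6, h7]
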